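/- Let π : MR^{(r)} → NSym be the algebra homomorphism with π(S_j^{(i)}) = S_j for all j ≥ 1 and 1 ≤ i ≤ r. Then for every colored composition (I,u), writing (I,u) as the concatenation of its maximal runs of consecutive parts of constant color, with underlying (uncolored) compositions I^{(1)},…,I^{(m)}, one has π(R_{(I,u)}) = R_{I^{(1)}} · R_{I^{(2)}} ⋯ R_{I^{(m)}}, a product of ordinary noncommutative ribbon functions. -/

import Mathlib

noncomputable section

namespace MR

/-- The Mantaci-Reutenauer algebra `MR^{(r)}`: the free associative `ℂ`-algebra on the
symbols `S_j^{(i)}` with `j ≥ 1` and `1 ≤ i ≤ r` (encoded as pairs `(j, i) : ℕ+ × Fin r`). -/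
abbrev MRAlg (r : ℕ) : Type := FreeAlgebra ℂ (ℕ+ × Fin r)

/-- A colored composition, encoded as a list of pairs (part, color)
with positive parts. -/
abbrev CComp (r : ℕ) : Type := List (ℕ+ × Fin r)

/-- The size (sum of the parts) of a colored composition. -/
def size {r : ℕ} (I : CComp r) : ℕ := (I.map fun p => (p.1 : ℕ)).sum

/-- `S^{(I,u)} = S_{i_1}^{(u_1)} ⋯ S_{i_p}^{(u_p)}`. -/
def S {r : ℕ} (I : CComp r) : MRAlg r := (I.map (FreeAlgebra.ι ℂ)).prod

/-- One coarsening step: replace a nonempty group of consecutive parts all of the same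
color by their sum, with that common color. -/
def Step {r : ℕ} (I J : CComp r) : Prop :=
  ∃ (pre mid post : CComp r) (b : Fin r) (m : ℕ+),
    mid ≠ [] ∧ (∀ p ∈ mid, p.2 = b) ∧
    (m : ℕ) = (mid.map fun p => (p.1 : ℕ)).sum ∧
    I = pre ++ mid ++ post ∧ J = pre ++ (m, b) :: post

/-- The partial order on colored compositions: `(J,v) ≤ (I,u)` iff `(J,v)` is obtained
from `(I,u)` by repeatedly replacing groups of consecutive parts of the same color by
their sums. -/
def CLe {r : ℕ} (J I : CComp r) : Prop := Relation.ReflTransGen Step I J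

/-- The colored ribbon `R_{(I,u)} = Σ_{(J,v) ≤ (I,u)} (−1)^{ℓ(I)−ℓ(J)} S^{(J,v)}`. -/
def Rib {r : ℕ} (I : CComp r) : MRAlg r :=
  ∑ᶠ J ∈ {J : CComp r | CLe J I}, ((-1 : ℂ) ^ (I.length - J.length)) • S J

end MR

namespace MR

/-- `NSym`: the free associative `ℂ`-algebra on the symbols `S_j`, `j ≥ 1`. -/
abbrev NSym : Type := FreeAlgebra ℂ ℕ+

/-- The algebra homomorphism `π : MR^{(r)} → NSym`, `S_j^{(i)} ↦ S_j`. -/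
def piMR (r : ℕ) : MRAlg r →ₐ[ℂ] NSym :=
  FreeAlgebra.lift ℂ fun p : ℕ+ × Fin r => FreeAlgebra.ι ℂ p.1

/-- `S^J = S_{j_1} ⋯ S_{j_q}` in `NSym`. -/
def SN (I : List ℕ+) : NSym := (I.map (FreeAlgebra.ι ℂ)).prod

/-- One anti-refinement step on (uncolored) compositions: replace a nonempty group of
consecutive parts by their sum. -/
def StepN (I J : List ℕ+) : Prop :=
  ∃ (pre mid post : List ℕ+) (m : ℕ+),
    mid ≠ [] ∧ (m : ℕ) = (mid.map fun p => (p : ℕ)).sum ∧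
    I = pre ++ mid ++ post ∧ J = pre ++ m :: post

/-- The anti-refinement order: `J ≼ I` iff `J` is obtained from `I` by summing groups of
consecutive parts. -/
def NLe (J I : List ℕ+) : Prop := Relation.ReflTransGen StepN I J

/-- The noncommutative ribbon function `R_I = Σ_{J ≼ I} (−1)^{ℓ(I)−ℓ(J)} S^J`. -/
def RibN (I : List ℕ+) : NSym :=
  ∑ᶠ J ∈ {J : List ℕ+ | NLe J I}, ((-1 : ℂ) ^ (I.length - J.length)) • SN J

variable {r : ℕ}

lemma S_append (x y : CComp r) : S (x ++ y) = S x * S y := by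
  simp [S]

lemma step_ne_nil {I J : CComp r} (h : Step I J) : J ≠ [] := by
  obtain ⟨pre, mid, post, b, m, -, -, -, -, rfl⟩ := h; simp

lemma step_length_le {I J : CComp r} (h : Step I J) : J.length ≤ I.length := by
  obtain ⟨pre, mid, post, b, m, hmid, -, -, rfl, rfl⟩ := h
  have : 1 ≤ mid.length := List.length_pos_iff.2 hmid
  simp only [List.length_append, List.length_cons]
  omega

lemma cle_length_le {I J : CComp r} (h : CLe J I) : J.length ≤ I.length := by
  induction h with
  | refl => exact le_rfl
  | tail h1 hstep ih => exact (step_length_le hstep).trans ih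

lemma step_size {I J : CComp r} (h : Step I J) : size J = size I := by
  obtain ⟨pre, mid, post, b, m, hmid, -, hm, rfl, rfl⟩ := h
  simp [size, hm]

lemma cle_size {I J : CComp r} (h : CLe J I) : size J = size I := by
  induction h with
  | refl => rfl
  | tail h1 hstep ih => exact (step_size hstep).trans ih

lemma step_mono {b : Fin r} {I J : CComp r} (hI : ∀ p ∈ I, p.2 = b) (h : Step I J) :
    ∀ p ∈ J, p.2 = b := by
  obtain ⟨pre, mid, post, b', m, hmid, hmidc, -, rfl, rfl⟩ := h
  obtain ⟨x, hx⟩ := List.exists_mem_of_ne_nil mid hmid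
  have hb' : b' = b := by rw [← hmidc x hx]; exact hI x (by simp [hx])
  intro p hp
  rcases List.mem_append.1 hp with hp | hp
  · exact hI p (by simp [hp])
  · rcases List.mem_cons.1 hp with rfl | hp
    · exact hb'
    · exact hI p (by simp [hp])

lemma step_head_color {I J : CComp r} (h : Step I J) :
    J.head?.map Prod.snd = I.head?.map Prod.snd := by
  obtain ⟨pre, mid, post, b', m, hmid, hmidc, -, rfl, rfl⟩ := h
  cases pre with
  | nil =>
    obtain ⟨x, xs, rfl⟩ := List.exists_cons_of_ne_nil hmid
    simp [hmidc x (by simp)]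
  | cons q qs => simp

lemma cle_head_color {I J : CComp r} (h : CLe J I) :
    J.head?.map Prod.snd = I.head?.map Prod.snd := by
  induction h with
  | refl => rfl
  | tail h1 hstep ih => exact (step_head_color hstep).trans ih

lemma cle_mono {b : Fin r} {I J : CComp r} (hI : ∀ p ∈ I, p.2 = b) (h : CLe J I) :
    ∀ p ∈ J, p.2 = b := by
  induction h with
  | refl => exact hI
  | tail h1 hstep ih => exact step_mono ih hstep

lemma cle_nil {J : CComp r} (h : CLe J ([] : CComp r)) : J = [] := by
  induction h with
  | refl => rfl
  | tail h1 hstep ih =>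
    subst ih
    obtain ⟨pre, mid, post, b, m, hmid, -, -, habs, -⟩ := hstep
    have habs' := habs.symm
    simp only [List.append_eq_nil_iff] at habs'
    exact absurd habs'.1.2 hmid

lemma step_append_right {X Y : CComp r} (h : Step X Y) (C : CComp r) :
    Step (X ++ C) (Y ++ C) := by
  obtain ⟨pre, mid, post, b, m, hmid, hmidc, hm, rfl, rfl⟩ := h
  exact ⟨pre, mid, post ++ C, b, m, hmid, hmidc, hm, by simp, by simp⟩

lemma step_append_left {X Y : CComp r} (h : Step X Y) (C : CComp r) :
    Step (C ++ X) (C ++ Y) := by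
  obtain ⟨pre, mid, post, b, m, hmid, hmidc, hm, rfl, rfl⟩ := h
  exact ⟨C ++ pre, mid, post, b, m, hmid, hmidc, hm, by simp, by simp⟩

lemma cle_append_of {A B JA JB : CComp r} (hA : CLe JA A) (hB : CLe JB B) :
    CLe (JA ++ JB) (A ++ B) := by
  have h1 : CLe (JA ++ B) (A ++ B) :=
    Relation.ReflTransGen.lift (· ++ B) (fun _ _ h => step_append_right h B) _ _ hA
  have h2 : CLe (JA ++ JB) (JA ++ B) :=
    Relation.ReflTransGen.lift (JA ++ ·) (fun _ _ h => step_append_left h JA) _ _ hB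
  exact h1.trans h2

lemma step_split {b c : Fin r} {JA JB J : CComp r}
    (hJA : ∀ p ∈ JA, p.2 = b) (hJB : JB.head?.map Prod.snd = some c) (hbc : b ≠ c)
    (h : Step (JA ++ JB) J) :
    (∃ JA', Step JA JA' ∧ J = JA' ++ JB) ∨ (∃ JB', Step JB JB' ∧ J = JA ++ JB') := by
  obtain ⟨pre, mid, post, b', m, hmid, hmidc, hm, heq, rfl⟩ := h
  rw [List.append_assoc] at heq
  rcases List.append_eq_append_iff.1 heq with ⟨a, rfl, hJB'⟩ | ⟨c', hJA', h2⟩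
  · right
    exact ⟨a ++ (m, b') :: post,
      ⟨a, mid, post, b', m, hmid, hmidc, hm, by rw [hJB', List.append_assoc], rfl⟩, by simp⟩
  · rcases List.append_eq_append_iff.1 h2 with ⟨a, rfl, rfl⟩ | ⟨d, hmid2, hJB2⟩
    · -- c' = mid ++ a, post = a ++ JB
      left
      exact ⟨pre ++ (m, b') :: a,
        ⟨pre, mid, a, b', m, hmid, hmidc, hm, by rw [hJA', List.append_assoc], rfl⟩, by simp⟩
    · -- mid = c' ++ d, JB = d ++ post
      cases d with
      | nil =>
        left
        simp only [List.append_nil] at hmid2 hJB2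
        subst hmid2
        refine ⟨pre ++ [(m, b')],
          ⟨pre, mid, [], b', m, hmid, hmidc, hm, by simp [hJA'], by simp⟩, by simp [hJB2]⟩
      | cons y ys =>
        cases c' with
        | nil =>
          right
          simp only [List.nil_append] at hmid2
          exact ⟨(m, b') :: post,
            ⟨[], mid, post, b', m, hmid, hmidc, hm, by simp [hJB2, hmid2], by simp⟩,
            by simp [hJA']⟩
        | cons x xs =>
          exfalso
          have hx1 : (x, x.2).2 = b := by
            exact hJA (x) (by rw [hJA']; simp)
          have hx2 : x.2 = b' := hmidc x (by rw [hmid2]; simp)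
          have hy2 : y.2 = b' := hmidc y (by rw [hmid2]; simp)
          have hyc : y.2 = c := by
            rw [hJB2] at hJB
            simpa using hJB
          exact hbc (by rw [← hx1, hx2, ← hyc, hy2])

lemma cle_split {b c : Fin r} {A B J : CComp r}
    (hA : ∀ p ∈ A, p.2 = b) (hB : B.head?.map Prod.snd = some c) (hbc : b ≠ c)
    (h : CLe J (A ++ B)) :
    ∃ JA JB, CLe JA A ∧ CLe JB B ∧ J = JA ++ JB := by
  induction h with
  | refl => exact ⟨A, B, Relation.ReflTransGen.refl, Relation.ReflTransGen.refl, rfl⟩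
  | tail h1 hstep ih =>
    obtain ⟨JA, JB, hJA, hJB, rfl⟩ := ih
    have hJAb : ∀ p ∈ JA, p.2 = b := cle_mono hA hJA
    have hJBc : JB.head?.map Prod.snd = some c := (cle_head_color hJB).trans hB
    rcases step_split hJAb hJBc hbc hstep with ⟨JA', hs, rfl⟩ | ⟨JB', hs, rfl⟩
    · exact ⟨JA', JB, hJA.tail hs, hJB, rfl⟩
    · exact ⟨JA, JB', hJA, hJB.tail hs, rfl⟩

lemma split_unique {b c : Fin r} {JA JB JA' JB' : CComp r}
    (h1 : ∀ p ∈ JA, p.2 = b) (h1' : ∀ p ∈ JA', p.2 = b)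
    (h2 : JB.head?.map Prod.snd = some c) (h2' : JB'.head?.map Prod.snd = some c)
    (hbc : b ≠ c) (h : JA ++ JB = JA' ++ JB') : JA = JA' ∧ JB = JB' := by
  rcases List.append_eq_append_iff.1 h with ⟨a, rfl, rfl⟩ | ⟨a, rfl, rfl⟩
  · cases a with
    | nil => simp
    | cons y ys =>
      exfalso
      have hy1 : y.2 = b := h1' y (by simp)
      have hy2 : y.2 = c := by simpa using h2
      exact hbc (hy1 ▸ hy2 ▸ rfl)
  · cases a with
    | nil => simp
    | cons y ys =>
      exfalso
      have hy1 : y.2 = b := h1 y (by simp)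
      have hy2 : y.2 = c := by simpa using h2'
      exact hbc (hy1 ▸ hy2 ▸ rfl)

lemma cle_part_le {I J : CComp r} (h : CLe J I) : ∀ p ∈ J, (p.1 : ℕ) ≤ size I := by
  intro p hp
  have h1 : (p.1 : ℕ) ≤ size J := by
    simpa [size] using List.single_le_sum (l := J.map fun q => ((q.1 : ℕ)))
      (fun x _ => Nat.zero_le x) (p.1 : ℕ) (List.mem_map_of_mem hp)
  rwa [cle_size h] at h1

lemma finite_cle (I : CComp r) : {J : CComp r | CLe J I}.Finite := by
  classical
  set s := size I with hs
  apply Set.Finite.subset (Set.Finite.image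
    (f := fun l : List (Fin (s+1) × Fin r) =>
      l.map fun q => ((⟨(q.1 : ℕ) + 1, Nat.succ_pos _⟩ : ℕ+), q.2))
    (List.finite_length_le _ I.length))
  intro J hJ
  refine ⟨J.map fun p => ((⟨min ((p.1 : ℕ) - 1) s, by omega⟩ : Fin (s+1)), p.2),
    by simp only [Set.mem_setOf_eq, List.length_map]; exact cle_length_le hJ, ?_⟩
  dsimp only
  rw [List.map_map]
  conv_rhs => rw [← List.map_id J]
  apply List.map_congr_left
  intro p hp
  have hle : (p.1 : ℕ) ≤ s := cle_part_le hJ p hp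
  have hpos : 1 ≤ (p.1 : ℕ) := p.1.2
  have : ((⟨min ((p.1 : ℕ) - 1) s, by omega⟩ : Fin (s+1)) : ℕ) + 1 = (p.1 : ℕ) := by
    simp only [Fin.val_mk]; omega
  exact Prod.ext (PNat.coe_injective this) rfl

lemma rib_eq_sum (I : CComp r) :
    Rib I = ∑ J ∈ (finite_cle I).toFinset, ((-1 : ℂ) ^ (I.length - J.length)) • S J := by
  rw [Rib]
  exact finsum_mem_eq_finite_toFinset_sum _ (finite_cle I)

lemma rib_append {A B : CComp r} {b c : Fin r}
    (hA : ∀ p ∈ A, p.2 = b) (hB : B.head?.map Prod.snd = some c) (hbc : b ≠ c) :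
    Rib (A ++ B) = Rib A * Rib B := by
  classical
  rw [rib_eq_sum, rib_eq_sum, rib_eq_sum, Finset.sum_mul_sum, ← Finset.sum_product']
  refine (Finset.sum_bij (fun (p : CComp r × CComp r) _ => p.1 ++ p.2) ?_ ?_ ?_ ?_).symm
  · rintro ⟨JA, JB⟩ hp
    simp only [Finset.mem_product, Set.Finite.mem_toFinset, Set.mem_setOf_eq] at hp ⊢
    exact cle_append_of hp.1 hp.2
  · rintro ⟨JA, JB⟩ hp ⟨JA', JB'⟩ hp' heq
    simp only [Finset.mem_product, Set.Finite.mem_toFinset, Set.mem_setOf_eq] at hp hp'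
    obtain ⟨h1, h2⟩ := split_unique (cle_mono hA hp.1) (cle_mono hA hp'.1)
      ((cle_head_color hp.2).trans hB) ((cle_head_color hp'.2).trans hB) hbc heq
    exact Prod.ext h1 h2
  · intro J hJ
    simp only [Set.Finite.mem_toFinset, Set.mem_setOf_eq] at hJ
    obtain ⟨JA, JB, h1, h2, rfl⟩ := cle_split hA hB hbc hJ
    exact ⟨(JA, JB), by simp [Finset.mem_product, Set.Finite.mem_toFinset,
      Set.mem_setOf_eq, h1, h2], rfl⟩
  · rintro ⟨JA, JB⟩ hp
    simp only [Finset.mem_product, Set.Finite.mem_toFinset, Set.mem_setOf_eq] at hp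
    rw [smul_mul_smul_comm, ← pow_add, S_append]
    congr 2
    have h1 := cle_length_le hp.1
    have h2 := cle_length_le hp.2
    simp only [List.length_append]
    omega



lemma sum_coe_fst (mid : List (ℕ+ × Fin r)) :
    ((mid.map Prod.fst).map fun p => (p : ℕ)).sum = (mid.map fun p => ((p.1 : ℕ))).sum := by
  induction mid with
  | nil => rfl
  | cons x xs ih => simpa using ih

lemma sum_coe_pair (b : Fin r) (mid : List ℕ+) :
    ((mid.map fun n => (n, b)).map fun p => ((p.1 : ℕ))).sum
      = (mid.map fun p => (p : ℕ)).sum := by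
  induction mid with
  | nil => rfl
  | cons x xs ih => simpa using ih

lemma pi_S (J : CComp r) : piMR r (S J) = SN (J.map Prod.fst) := by
  rw [S, SN, map_list_prod, List.map_map, List.map_map]
  congr 1
  apply List.map_congr_left
  intro p _
  simp [piMR]

lemma stepN_of_step {X Y : CComp r} (h : Step X Y) :
    StepN (X.map Prod.fst) (Y.map Prod.fst) := by
  obtain ⟨pre, mid, post, b, m, hmid, -, hm, rfl, rfl⟩ := h
  refine ⟨pre.map Prod.fst, mid.map Prod.fst, post.map Prod.fst, m,
    by simpa using hmid, ?_, by simp, by simp⟩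
  rw [hm]
  exact (sum_coe_fst mid).symm

lemma step_of_stepN {L M : List ℕ+} (b : Fin r) (h : StepN L M) :
    Step (L.map fun n => (n, b)) (M.map fun n => (n, b)) := by
  obtain ⟨pre, mid, post, m, hmid, hm, rfl, rfl⟩ := h
  refine ⟨pre.map fun n => (n, b), mid.map fun n => (n, b), post.map fun n => (n, b), b, m,
    by simpa using hmid, by simp, ?_, by simp, by simp⟩
  rw [hm]
  exact (sum_coe_pair b mid).symm

lemma mono_eq_map {b : Fin r} {J : CComp r} (hJ : ∀ p ∈ J, p.2 = b) :
    (J.map Prod.fst).map (fun n => (n, b)) = J := by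
  rw [List.map_map]
  conv_rhs => rw [← List.map_id J]
  apply List.map_congr_left
  intro p hp
  exact Prod.ext rfl (hJ p hp).symm

lemma nle_set_eq {b : Fin r} {A : CComp r} (hA : ∀ p ∈ A, p.2 = b) :
    {L : List ℕ+ | NLe L (A.map Prod.fst)} =
      (List.map Prod.fst) '' {J : CComp r | CLe J A} := by
  ext L
  constructor
  · intro hL
    refine ⟨L.map fun n => (n, b), ?_, by simp [List.map_map, Function.comp_def]⟩
    have : Relation.ReflTransGen Step ((A.map Prod.fst).map fun n => (n, b)) (L.map fun n => (n, b)) :=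
      Relation.ReflTransGen.lift (List.map fun n : ℕ+ => (n, b))
      (fun _ _ h => step_of_stepN b h) _ _ hL
    rwa [mono_eq_map hA] at this
  · rintro ⟨J, hJ, rfl⟩
    exact Relation.ReflTransGen.lift _ (fun _ _ h => stepN_of_step h) _ _ hJ

lemma pi_rib_mono {A : CComp r} {b : Fin r} (hA : ∀ p ∈ A, p.2 = b) :
    piMR r (Rib A) = RibN (A.map Prod.fst) := by
  classical
  have hfin : {L : List ℕ+ | NLe L (A.map Prod.fst)}.Finite := by
    rw [nle_set_eq hA]
    exact (finite_cle A).image _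
  rw [rib_eq_sum, map_sum, RibN, finsum_mem_eq_finite_toFinset_sum _ hfin]
  refine Finset.sum_bij (fun J _ => J.map Prod.fst) ?_ ?_ ?_ ?_
  · intro J hJ
    simp only [Set.Finite.mem_toFinset, Set.mem_setOf_eq] at hJ ⊢
    exact Relation.ReflTransGen.lift _ (fun _ _ h => stepN_of_step h) _ _ hJ
  · intro J hJ J' hJ' heq
    simp only [Set.Finite.mem_toFinset, Set.mem_setOf_eq] at hJ hJ'
    have heq' : J.map Prod.fst = J'.map Prod.fst := heq
    rw [← mono_eq_map (cle_mono hA hJ), ← mono_eq_map (cle_mono hA hJ'), heq']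
  · intro L hL
    rw [Set.Finite.mem_toFinset, nle_set_eq hA] at hL
    obtain ⟨J, hJ, rfl⟩ := hL
    exact ⟨J, (Set.Finite.mem_toFinset _).2 hJ, rfl⟩
  · intro J hJ
    rw [map_smul, pi_S]
    simp

lemma rib_nil : Rib ([] : CComp r) = 1 := by
  have hset : {J : CComp r | CLe J ([] : CComp r)} = {[]} := by
    ext J
    exact ⟨fun h => cle_nil h, fun h => by rw [Set.mem_singleton_iff] at h; subst h; exact Relation.ReflTransGen.refl⟩
  rw [Rib, hset, finsum_mem_singleton]
  simp [S]

lemma pi_rib_flatten : ∀ (Ks : List (CComp r)) (bs : List (Fin r)),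
    List.Forall₂ (fun (K : CComp r) (b : Fin r) => K ≠ [] ∧ ∀ p ∈ K, p.2 = b) Ks bs →
    bs.Chain' (· ≠ ·) →
    piMR r (Rib Ks.flatten) = (Ks.map fun K => RibN (K.map fun p => p.1)).prod := by
  intro Ks bs h
  induction h with
  | nil =>
    intro _
    simp only [List.flatten_nil, List.map_nil, List.prod_nil, rib_nil, map_one]
  | @cons K b Ks' bs' hKb htail ih =>
    intro hchain
    have hchain' : bs'.Chain' (· ≠ ·) := hchain.tail
    cases htail with
    | nil =>
      simp only [List.flatten_cons, List.flatten_nil, List.append_nil, List.map_cons,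
        List.map_nil, List.prod_cons, List.prod_nil, mul_one]
      exact pi_rib_mono hKb.2
    | @cons K2 b2 rest brest hK2 htail2 =>
      have hbb2 : b ≠ b2 := (List.isChain_cons_cons.1 hchain).1
      obtain ⟨y, ys, hK2eq⟩ := List.exists_cons_of_ne_nil hK2.1
      have hB : ((K2 :: rest).flatten).head?.map Prod.snd = some b2 := by
        rw [List.flatten_cons, hK2eq]
        simp [hK2.2 y (by rw [hK2eq]; simp)]
      rw [List.flatten_cons, rib_append hKb.2 hB hbb2, map_mul, pi_rib_mono hKb.2,
        ih hchain']
      simp [List.prod_cons]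


/-- if the colored composition `(I,u)` is the concatenation of its maximal
constant-color runs with underlying uncolored compositions `I^{(1)},…,I^{(m)}`, then
`π(R_{(I,u)}) = R_{I^{(1)}} ⋯ R_{I^{(m)}}`, a product of ordinary noncommutative ribbons. -/
theorem pi_ribbon_runs (r : ℕ) (hr : 1 ≤ r)
    (Ks : List (CComp r)) (bs : List (Fin r)) (hlen : Ks.length = bs.length)
    (hne : ∀ K ∈ Ks, K ≠ [])
    (hcol : ∀ k : Fin Ks.length, ∀ p ∈ Ks.get k, p.2 = bs.get (Fin.cast hlen k))
    (hadj : bs.Chain' (· ≠ ·)) :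
    piMR r (Rib Ks.flatten) = (Ks.map fun K => RibN (K.map fun p => p.1)).prod := by
  apply pi_rib_flatten Ks bs _ hadj
  rw [List.forall₂_iff_get]
  refine ⟨hlen, fun i h1 h2 => ⟨hne _ (Ks.get_mem _), fun p hp => ?_⟩⟩
  exact hcol ⟨i, h1⟩ p hp

end MR
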